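/- arXiv:1601.08098 — 4 statements merged into one kernel-verified Lean document; each statement's English description precedes it below -/
import Mathlib

section
/- The logarithmic mean Λ is jointly concave on ℝ₊ × ℝ₊: for all s₁,t₁,s₂,t₂ ≥ 0 and θ ∈ [0,1], Λ(θs₁+(1-θ)s₂, θt₁+(1-θ)t₂) ≥ θΛ(s₁,t₁) + (1-θ)Λ(s₂,t₂). -/
open MeasureTheory

/-- The logarithmic mean `Λ(s,t) = ∫₀¹ s^α t^{1-α} dα`. -/
noncomputable def logMean (s t : ℝ) : ℝ := ∫ a in (0:ℝ)..1, s ^ a * t ^ (1 - a)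

private lemma meas_rpow_const_base (s : ℝ) (hs : 0 ≤ s) :
    Measurable fun a : ℝ => s ^ a := by
  rcases eq_or_lt_of_le hs with rfl | hs'
  · have h : (fun a : ℝ => (0:ℝ) ^ a) = fun a => if a = 0 then 1 else 0 := by
      funext a
      rcases eq_or_ne a 0 with rfl | h
      · simp
      · simp [Real.zero_rpow h, h]
    rw [h]
    exact Measurable.ite (measurableSet_eq) measurable_const measurable_const
  · have h : (fun a : ℝ => s ^ a) = fun a => Real.exp (Real.log s * a) := by
      funext a
      rw [Real.rpow_def_of_pos hs']
    rw [h]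
    exact (Real.continuous_exp.comp (continuous_const.mul continuous_id)).measurable

private lemma rpow_le_max' (s a : ℝ) (hs : 0 ≤ s) (ha : 0 ≤ a) (ha1 : a ≤ 1) :
    s ^ a ≤ max s 1 := by
  rcases le_total s 1 with h | h
  · exact le_max_of_le_right (Real.rpow_le_one hs h ha)
  · calc s ^ a ≤ s ^ (1 : ℝ) := Real.rpow_le_rpow_of_exponent_le h ha1
      _ = s := Real.rpow_one s
      _ ≤ _ := le_max_left _ _

private lemma intInt (s t : ℝ) (hs : 0 ≤ s) (ht : 0 ≤ t) :
    IntervalIntegrable (fun a : ℝ => s ^ a * t ^ (1 - a)) volume 0 1 := by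
  rw [intervalIntegrable_iff, Set.uIoc_of_le (zero_le_one)]
  apply Measure.integrableOn_of_bounded (M := max s 1 * max t 1)
  · exact (measure_Ioc_lt_top).ne
  · exact ((meas_rpow_const_base s hs).mul
      ((meas_rpow_const_base t ht).comp (measurable_const.sub measurable_id))).aestronglyMeasurable
  · filter_upwards [ae_restrict_mem measurableSet_Ioc] with a ha
    have h1 : 0 ≤ s ^ a := Real.rpow_nonneg hs a
    have h2 : 0 ≤ t ^ (1 - a) := Real.rpow_nonneg ht _
    rw [Real.norm_eq_abs, abs_of_nonneg (mul_nonneg h1 h2)]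
    have hm1 : s ^ a ≤ max s 1 := rpow_le_max' s a hs ha.1.le ha.2
    have hm2 : t ^ (1 - a) ≤ max t 1 :=
      rpow_le_max' t (1 - a) ht (by linarith [ha.2]) (by linarith [ha.1.le])
    exact mul_le_mul hm1 hm2 h2 (le_trans h1 hm1)

private lemma pointwise_ineq (s₁ t₁ s₂ t₂ θ a : ℝ)
    (hs₁ : 0 ≤ s₁) (ht₁ : 0 ≤ t₁) (hs₂ : 0 ≤ s₂) (ht₂ : 0 ≤ t₂)
    (hθ₀ : 0 ≤ θ) (hθ₁ : θ ≤ 1) (ha : 0 ≤ a) (ha1 : a ≤ 1) :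
    θ * (s₁ ^ a * t₁ ^ (1 - a)) + (1 - θ) * (s₂ ^ a * t₂ ^ (1 - a))
      ≤ (θ * s₁ + (1 - θ) * s₂) ^ a * (θ * t₁ + (1 - θ) * t₂) ^ (1 - a) := by
  set S := θ * s₁ + (1 - θ) * s₂ with hSdef
  set T := θ * t₁ + (1 - θ) * t₂ with hTdef
  have hθ' : (0:ℝ) ≤ 1 - θ := by linarith
  have hS0 : 0 ≤ S := add_nonneg (mul_nonneg hθ₀ hs₁) (mul_nonneg hθ' hs₂)
  have hT0 : 0 ≤ T := add_nonneg (mul_nonneg hθ₀ ht₁) (mul_nonneg hθ' ht₂)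
  rcases eq_or_lt_of_le hS0 with hS | hS
  · -- S = 0
    have hθs₁ : θ * s₁ = 0 := by
      nlinarith [mul_nonneg hθ₀ hs₁, mul_nonneg hθ' hs₂]
    have hθs₂ : (1 - θ) * s₂ = 0 := by
      nlinarith [mul_nonneg hθ₀ hs₁, mul_nonneg hθ' hs₂]
    rcases eq_or_lt_of_le ha with ha0 | ha0
    · -- a = 0
      simp only [← ha0, Real.rpow_zero, sub_zero, Real.rpow_one, one_mul]
      exact hTdef.symm.le.trans (le_of_eq rfl)
    · -- a > 0
      have e1 : θ * (s₁ ^ a * t₁ ^ (1 - a)) = 0 := by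
        rcases mul_eq_zero.mp hθs₁ with h | h
        · simp [h]
        · simp [h, Real.zero_rpow ha0.ne']
      have e2 : (1 - θ) * (s₂ ^ a * t₂ ^ (1 - a)) = 0 := by
        rcases mul_eq_zero.mp hθs₂ with h | h
        · simp [h]
        · simp [h, Real.zero_rpow ha0.ne']
      rw [e1, e2, ← hS, Real.zero_rpow ha0.ne', zero_mul]
      norm_num
  rcases eq_or_lt_of_le hT0 with hT | hT
  · -- T = 0
    have hθt₁ : θ * t₁ = 0 := by
      nlinarith [mul_nonneg hθ₀ ht₁, mul_nonneg hθ' ht₂]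
    have hθt₂ : (1 - θ) * t₂ = 0 := by
      nlinarith [mul_nonneg hθ₀ ht₁, mul_nonneg hθ' ht₂]
    rcases eq_or_lt_of_le ha1 with ha0 | ha0
    · -- a = 1
      simp only [ha0, sub_self, Real.rpow_zero, Real.rpow_one, mul_one]
      exact hSdef.symm.le.trans (le_of_eq rfl)
    · -- a < 1
      have hpos : (0:ℝ) < 1 - a := by linarith
      have e1 : θ * (s₁ ^ a * t₁ ^ (1 - a)) = 0 := by
        rcases mul_eq_zero.mp hθt₁ with h | h
        · simp [h]
        · simp [h, Real.zero_rpow hpos.ne']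
      have e2 : (1 - θ) * (s₂ ^ a * t₂ ^ (1 - a)) = 0 := by
        rcases mul_eq_zero.mp hθt₂ with h | h
        · simp [h]
        · simp [h, Real.zero_rpow hpos.ne']
      rw [e1, e2, ← hT, Real.zero_rpow hpos.ne', mul_zero]
      norm_num
  -- main case S > 0, T > 0
  have g₁ : (s₁ / S) ^ a * (t₁ / T) ^ (1 - a) ≤ a * (s₁ / S) + (1 - a) * (t₁ / T) :=
    Real.geom_mean_le_arith_mean2_weighted ha (by linarith)
      (div_nonneg hs₁ hS.le) (div_nonneg ht₁ hT.le) (by ring)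
  have g₂ : (s₂ / S) ^ a * (t₂ / T) ^ (1 - a) ≤ a * (s₂ / S) + (1 - a) * (t₂ / T) :=
    Real.geom_mean_le_arith_mean2_weighted ha (by linarith)
      (div_nonneg hs₂ hS.le) (div_nonneg ht₂ hT.le) (by ring)
  have hSa : (0:ℝ) < S ^ a := Real.rpow_pos_of_pos hS a
  have hTa : (0:ℝ) < T ^ (1 - a) := Real.rpow_pos_of_pos hT _
  have hP : 0 ≤ S ^ a * T ^ (1 - a) := le_of_lt (mul_pos hSa hTa)
  have e1 : s₁ ^ a * t₁ ^ (1 - a)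
      = (S ^ a * T ^ (1 - a)) * ((s₁ / S) ^ a * (t₁ / T) ^ (1 - a)) := by
    rw [Real.div_rpow hs₁ hS.le, Real.div_rpow ht₁ hT.le]
    field_simp
  have e2 : s₂ ^ a * t₂ ^ (1 - a)
      = (S ^ a * T ^ (1 - a)) * ((s₂ / S) ^ a * (t₂ / T) ^ (1 - a)) := by
    rw [Real.div_rpow hs₂ hS.le, Real.div_rpow ht₂ hT.le]
    field_simp
  have esum : θ * (a * (s₁ / S) + (1 - a) * (t₁ / T)) +
      (1 - θ) * (a * (s₂ / S) + (1 - a) * (t₂ / T)) = 1 := by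
    have h : θ * (a * (s₁ / S) + (1 - a) * (t₁ / T)) +
        (1 - θ) * (a * (s₂ / S) + (1 - a) * (t₂ / T))
        = a * (S / S) + (1 - a) * (T / T) := by
      rw [hSdef, hTdef]; ring
    rw [h, div_self hS.ne', div_self hT.ne']; ring
  calc θ * (s₁ ^ a * t₁ ^ (1 - a)) + (1 - θ) * (s₂ ^ a * t₂ ^ (1 - a))
      = θ * ((S ^ a * T ^ (1 - a)) * ((s₁ / S) ^ a * (t₁ / T) ^ (1 - a))) +
        (1 - θ) * ((S ^ a * T ^ (1 - a)) * ((s₂ / S) ^ a * (t₂ / T) ^ (1 - a))) := by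
        rw [e1, e2]
    _ ≤ θ * ((S ^ a * T ^ (1 - a)) * (a * (s₁ / S) + (1 - a) * (t₁ / T))) +
        (1 - θ) * ((S ^ a * T ^ (1 - a)) * (a * (s₂ / S) + (1 - a) * (t₂ / T))) := by
        gcongr
    _ = (S ^ a * T ^ (1 - a)) *
        (θ * (a * (s₁ / S) + (1 - a) * (t₁ / T)) +
          (1 - θ) * (a * (s₂ / S) + (1 - a) * (t₂ / T))) := by ring
    _ = S ^ a * T ^ (1 - a) := by rw [esum, mul_one]

theorem logMean_concave (s₁ t₁ s₂ t₂ θ : ℝ)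
    (hs₁ : 0 ≤ s₁) (ht₁ : 0 ≤ t₁) (hs₂ : 0 ≤ s₂) (ht₂ : 0 ≤ t₂)
    (hθ₀ : 0 ≤ θ) (hθ₁ : θ ≤ 1) :
    θ * logMean s₁ t₁ + (1 - θ) * logMean s₂ t₂
      ≤ logMean (θ * s₁ + (1 - θ) * s₂) (θ * t₁ + (1 - θ) * t₂) := by
  have i₁ := intInt s₁ t₁ hs₁ ht₁
  have i₂ := intInt s₂ t₂ hs₂ ht₂
  have iF := intInt (θ * s₁ + (1 - θ) * s₂) (θ * t₁ + (1 - θ) * t₂)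
    (add_nonneg (mul_nonneg hθ₀ hs₁) (mul_nonneg (by linarith) hs₂))
    (add_nonneg (mul_nonneg hθ₀ ht₁) (mul_nonneg (by linarith) ht₂))
  unfold logMean
  rw [← intervalIntegral.integral_const_mul, ← intervalIntegral.integral_const_mul,
    ← intervalIntegral.integral_add (i₁.const_mul θ) (i₂.const_mul (1 - θ))]
  apply intervalIntegral.integral_mono_on zero_le_one
    ((i₁.const_mul θ).add (i₂.const_mul (1 - θ))) iF
  intro a ha
  exact pointwise_ineq s₁ t₁ s₂ t₂ θ a hs₁ ht₁ hs₂ ht₂ hθ₀ hθ₁ ha.1 ha.2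
end

section
/- The function (v,a,b) ↦ v²/Λ(a,b) is jointly convex and 1-homogeneous on ℝ × ℝ₊ × ℝ₊, where Λ is the logarithmic mean (with the convention that the value is 0 if v = 0 and Λ(a,b) = 0, and +∞ if v ≠ 0 and Λ(a,b) = 0). -/
open MeasureTheory

/-- The function `F(v,a,b) = v² / Λ(a,b)`, with value `0` if `v = 0` and `Λ(a,b) = 0`,
and `+∞` if `v ≠ 0` and `Λ(a,b) = 0`. -/
noncomputable def Ffn (v a b : ℝ) : ENNReal :=
  if 0 < logMean a b then ENNReal.ofReal (v ^ 2 / logMean a b)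
  else if v = 0 then 0
  else ⊤

open Set
lemma logMean_cont {a b : ℝ} (ha : 0 < a) (hb : 0 < b) :
    Continuous (fun α : ℝ => a ^ α * b ^ (1 - α)) := by
  have h : (fun α : ℝ => a ^ α * b ^ (1-α)) =
      fun α => Real.exp (Real.log a * α) * Real.exp (Real.log b * (1-α)) := by
    funext α; rw [Real.rpow_def_of_pos ha, Real.rpow_def_of_pos hb]
  rw [h]; fun_prop

lemma ae_zero_left {b : ℝ} : (fun α : ℝ => (0:ℝ) ^ α * b ^ (1 - α)) =ᵐ[volume] 0 := by
  filter_upwards [measure_eq_zero_iff_ae_notMem.mp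
    (show volume ({(0:ℝ)} : Set ℝ) = 0 from measure_singleton 0)] with α hα
  have : α ≠ 0 := by simpa using hα
  simp [Real.zero_rpow this]

lemma ae_zero_right {a : ℝ} : (fun α : ℝ => a ^ α * (0:ℝ) ^ (1 - α)) =ᵐ[volume] 0 := by
  filter_upwards [measure_eq_zero_iff_ae_notMem.mp
    (show volume ({(1:ℝ)} : Set ℝ) = 0 from measure_singleton 1)] with α hα
  have : (1:ℝ) - α ≠ 0 := by
    intro h; apply hα; simp only [mem_singleton_iff]; linarith
  simp [Real.zero_rpow this]

lemma logMean_integrable {a b : ℝ} (ha : 0 ≤ a) (hb : 0 ≤ b) :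
    IntervalIntegrable (fun α : ℝ => a ^ α * b ^ (1 - α)) volume 0 1 := by
  rcases ha.eq_or_lt with ha' | ha'
  · rw [intervalIntegrable_iff]
    exact (integrable_zero _ _ _).congr (ae_restrict_of_ae (ha' ▸ ae_zero_left).symm)
  rcases hb.eq_or_lt with hb' | hb'
  · rw [intervalIntegrable_iff]
    exact (integrable_zero _ _ _).congr (ae_restrict_of_ae (hb' ▸ ae_zero_right).symm)
  exact (logMean_cont ha' hb').intervalIntegrable 0 1

lemma logMean_nonneg {a b : ℝ} (ha : 0 ≤ a) (hb : 0 ≤ b) : 0 ≤ logMean a b := by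
  apply intervalIntegral.integral_nonneg zero_le_one
  intro x _; positivity

lemma logMean_pos {a b : ℝ} (ha : 0 < a) (hb : 0 < b) : 0 < logMean a b := by
  apply intervalIntegral.intervalIntegral_pos_of_pos_on (logMean_integrable ha.le hb.le) _
    zero_lt_one
  intro x _; positivity

lemma logMean_zero_zero : logMean 0 0 = 0 := by
  have h : ∀ α : ℝ, (0:ℝ) ^ α * (0:ℝ) ^ (1 - α) = 0 := by
    intro α
    rcases eq_or_ne α 0 with h | h
    · subst h; norm_num
    · simp [Real.zero_rpow h]
  simp only [logMean, h, intervalIntegral.integral_zero]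

lemma logMean_smul {c a b : ℝ} (hc : 0 < c) (ha : 0 ≤ a) (hb : 0 ≤ b) :
    logMean (c * a) (c * b) = c * logMean a b := by
  unfold logMean
  rw [← intervalIntegral.integral_const_mul]
  apply intervalIntegral.integral_congr
  intro α _
  show (c * a) ^ α * (c * b) ^ (1 - α) = c * (a ^ α * b ^ (1 - α))
  rw [Real.mul_rpow hc.le ha, Real.mul_rpow hc.le hb,
    show c ^ α * a ^ α * (c ^ (1-α) * b ^ (1-α)) = (c ^ α * c ^ (1-α)) * (a ^ α * b ^ (1-α))
      from by ring, ← Real.rpow_add hc]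
  norm_num

lemma theta_rpow {θ α : ℝ} (hθ : 0 ≤ θ) : θ ^ α * θ ^ (1 - α) = θ := by
  rcases hθ.eq_or_lt with h | h
  · subst h
    rcases eq_or_ne α 0 with h' | h'
    · subst h'; norm_num
    · simp [Real.zero_rpow h']
  · rw [← Real.rpow_add h]; norm_num

lemma geom_superadd {x₁ y₁ x₂ y₂ α : ℝ} (hx₁ : 0 ≤ x₁) (hy₁ : 0 ≤ y₁)
    (hx₂ : 0 ≤ x₂) (hy₂ : 0 ≤ y₂) (h0 : 0 ≤ α) (h1 : α ≤ 1) :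
    x₁ ^ α * y₁ ^ (1-α) + x₂ ^ α * y₂ ^ (1-α) ≤ (x₁ + x₂) ^ α * (y₁ + y₂) ^ (1-α) := by
  rcases eq_or_lt_of_le (by positivity : (0:ℝ) ≤ x₁ + x₂) with hX | hX
  · have hx1 : x₁ = 0 := by linarith
    have hx2 : x₂ = 0 := by linarith
    subst hx1; subst hx2
    rcases eq_or_ne α 0 with h | h
    · subst h; norm_num
    · simp [Real.zero_rpow h]
  rcases eq_or_lt_of_le (by positivity : (0:ℝ) ≤ y₁ + y₂) with hY | hY
  · have hy1 : y₁ = 0 := by linarith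
    have hy2 : y₂ = 0 := by linarith
    subst hy1; subst hy2
    rcases eq_or_ne (1 - α) 0 with h | h
    · have : α = 1 := by linarith
      subst this; norm_num
    · simp [Real.zero_rpow h]
  have key : ∀ x y : ℝ, 0 ≤ x → 0 ≤ y →
      x ^ α * y ^ (1-α) ≤ (x₁+x₂) ^ α * (y₁+y₂) ^ (1-α) * (α * (x/(x₁+x₂)) + (1-α) * (y/(y₁+y₂))) := by
    intro x y hx hy
    have h2 := Real.geom_mean_le_arith_mean2_weighted (w₁ := α) (w₂ := 1-α) h0 (by linarith) (div_nonneg hx hX.le)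
      (div_nonneg hy hY.le) (by ring)
    have e : x ^ α * y ^ (1-α) =
        (x₁+x₂) ^ α * (y₁+y₂) ^ (1-α) * ((x/(x₁+x₂)) ^ α * (y/(y₁+y₂)) ^ (1-α)) := by
      rw [Real.div_rpow hx hX.le, Real.div_rpow hy hY.le]
      field_simp
    rw [e]
    have hp : (0:ℝ) < (x₁+x₂) ^ α * (y₁+y₂) ^ (1-α) := by positivity
    exact mul_le_mul_of_nonneg_left h2 hp.le
  have k1 := key x₁ y₁ hx₁ hy₁
  have k2 := key x₂ y₂ hx₂ hy₂
  have e2 : (x₁+x₂) ^ α * (y₁+y₂) ^ (1-α) * (α * (x₁/(x₁+x₂)) + (1-α) * (y₁/(y₁+y₂)))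
      + (x₁+x₂) ^ α * (y₁+y₂) ^ (1-α) * (α * (x₂/(x₁+x₂)) + (1-α) * (y₂/(y₁+y₂)))
      = (x₁+x₂) ^ α * (y₁+y₂) ^ (1-α) := by
    field_simp
    ring
  linarith

lemma geom_concave_pt {a₁ b₁ a₂ b₂ θ α : ℝ} (ha₁ : 0 ≤ a₁) (hb₁ : 0 ≤ b₁)
    (ha₂ : 0 ≤ a₂) (hb₂ : 0 ≤ b₂) (hθ0 : 0 ≤ θ) (hθ1 : θ ≤ 1)
    (h0 : 0 ≤ α) (h1 : α ≤ 1) :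
    θ * (a₁ ^ α * b₁ ^ (1-α)) + (1-θ) * (a₂ ^ α * b₂ ^ (1-α)) ≤
      (θ * a₁ + (1-θ) * a₂) ^ α * (θ * b₁ + (1-θ) * b₂) ^ (1-α) := by
  have e1 : θ * (a₁ ^ α * b₁ ^ (1-α)) = (θ * a₁) ^ α * (θ * b₁) ^ (1-α) := by
    rw [Real.mul_rpow hθ0 ha₁, Real.mul_rpow hθ0 hb₁,
      show θ ^ α * a₁ ^ α * (θ ^ (1-α) * b₁ ^ (1-α))
        = (θ ^ α * θ ^ (1-α)) * (a₁ ^ α * b₁ ^ (1-α)) from by ring, theta_rpow hθ0]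
  have hθ1' : (0:ℝ) ≤ 1 - θ := by linarith
  have e2 : (1-θ) * (a₂ ^ α * b₂ ^ (1-α)) = ((1-θ) * a₂) ^ α * ((1-θ) * b₂) ^ (1-α) := by
    rw [Real.mul_rpow hθ1' ha₂, Real.mul_rpow hθ1' hb₂,
      show (1-θ) ^ α * a₂ ^ α * ((1-θ) ^ (1-α) * b₂ ^ (1-α))
        = ((1-θ) ^ α * (1-θ) ^ (1-α)) * (a₂ ^ α * b₂ ^ (1-α)) from by ring, theta_rpow hθ1']
  rw [e1, e2]
  exact geom_superadd (by positivity) (by positivity) (by positivity) (by positivity) h0 h1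

lemma logMean_concave_s7 {a₁ b₁ a₂ b₂ θ : ℝ} (ha₁ : 0 ≤ a₁) (hb₁ : 0 ≤ b₁)
    (ha₂ : 0 ≤ a₂) (hb₂ : 0 ≤ b₂) (hθ0 : 0 ≤ θ) (hθ1 : θ ≤ 1) :
    θ * logMean a₁ b₁ + (1-θ) * logMean a₂ b₂ ≤
      logMean (θ * a₁ + (1-θ) * a₂) (θ * b₁ + (1-θ) * b₂) := by
  have hθ1' : (0:ℝ) ≤ 1 - θ := by linarith
  unfold logMean
  rw [← intervalIntegral.integral_const_mul, ← intervalIntegral.integral_const_mul,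
    ← intervalIntegral.integral_add ((logMean_integrable ha₁ hb₁).const_mul θ)
      ((logMean_integrable ha₂ hb₂).const_mul (1-θ))]
  apply intervalIntegral.integral_mono_on zero_le_one
    (((logMean_integrable ha₁ hb₁).const_mul θ).add ((logMean_integrable ha₂ hb₂).const_mul (1-θ)))
    (logMean_integrable (by positivity) (by positivity))
  intro α hα
  exact geom_concave_pt ha₁ hb₁ ha₂ hb₂ hθ0 hθ1 hα.1 hα.2

lemma qol {v₁ v₂ s₁ s₂ θ : ℝ} (hs₁ : 0 < s₁) (hs₂ : 0 < s₂) (hθ0 : 0 ≤ θ) (hθ1 : θ ≤ 1) :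
    (θ * v₁ + (1-θ) * v₂) ^ 2 / (θ * s₁ + (1-θ) * s₂) ≤ θ * (v₁ ^ 2 / s₁) + (1-θ) * (v₂ ^ 2 / s₂) := by
  have hθ1' : (0:ℝ) ≤ 1 - θ := by linarith
  have hS : 0 < θ * s₁ + (1-θ) * s₂ := by
    nlinarith [lt_min hs₁ hs₂, min_le_left s₁ s₂, min_le_right s₁ s₂]
  rw [show θ * (v₁ ^ 2 / s₁) + (1-θ) * (v₂ ^ 2 / s₂)
      = (θ * (v₁ ^ 2 * s₂) + (1-θ) * (v₂ ^ 2 * s₁)) / (s₁ * s₂) from by field_simp,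
    div_le_div_iff₀ hS (by positivity)]
  nlinarith [mul_nonneg (mul_nonneg hθ0 hθ1') (sq_nonneg (v₁ * s₂ - v₂ * s₁)), mul_pos hs₁ hs₂]

lemma Ffn_zero_v (a b : ℝ) : Ffn 0 a b = 0 := by
  unfold Ffn; split_ifs <;> simp_all

lemma Ffn_of_pos {a b : ℝ} (h : 0 < logMean a b) (v : ℝ) :
    Ffn v a b = ENNReal.ofReal (v ^ 2 / logMean a b) := if_pos h

lemma Ffn_top {v a b : ℝ} (h : ¬ 0 < logMean a b) (hv : v ≠ 0) : Ffn v a b = ⊤ := by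
  unfold Ffn; rw [if_neg h, if_neg hv]

theorem Ffn_convex_and_homogeneous :
    (∀ v₁ a₁ b₁ v₂ a₂ b₂ θ : ℝ, 0 ≤ a₁ → 0 ≤ b₁ → 0 ≤ a₂ → 0 ≤ b₂ → 0 ≤ θ → θ ≤ 1 →
      Ffn (θ * v₁ + (1 - θ) * v₂) (θ * a₁ + (1 - θ) * a₂) (θ * b₁ + (1 - θ) * b₂)
        ≤ ENNReal.ofReal θ * Ffn v₁ a₁ b₁ + ENNReal.ofReal (1 - θ) * Ffn v₂ a₂ b₂)
    ∧ (∀ c v a b : ℝ, 0 ≤ c → 0 ≤ a → 0 ≤ b →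
      Ffn (c * v) (c * a) (c * b) = ENNReal.ofReal c * Ffn v a b) := by
  constructor
  · intro v₁ a₁ b₁ v₂ a₂ b₂ θ ha₁ hb₁ ha₂ hb₂ hθ0 hθ1
    rcases eq_or_lt_of_le hθ0 with h0 | h0
    · rw [← h0]; norm_num
    rcases eq_or_lt_of_le hθ1 with h1 | h1
    · rw [h1]; norm_num
    have hθ1' : (0:ℝ) < 1 - θ := by linarith
    have hconc := logMean_concave_s7 ha₁ hb₁ ha₂ hb₂ hθ0 hθ1
    have hΛ₁0 : 0 ≤ logMean a₁ b₁ := logMean_nonneg ha₁ hb₁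
    have hΛ₂0 : 0 ≤ logMean a₂ b₂ := logMean_nonneg ha₂ hb₂
    by_cases hp1 : 0 < logMean a₁ b₁ <;> by_cases hp2 : 0 < logMean a₂ b₂
    · -- main case
      have hS : 0 < θ * logMean a₁ b₁ + (1-θ) * logMean a₂ b₂ := by positivity
      have hc : 0 < logMean (θ*a₁+(1-θ)*a₂) (θ*b₁+(1-θ)*b₂) := lt_of_lt_of_le hS hconc
      rw [Ffn_of_pos hc, Ffn_of_pos hp1, Ffn_of_pos hp2, ← ENNReal.ofReal_mul hθ0,
        ← ENNReal.ofReal_mul hθ1'.le, ← ENNReal.ofReal_add (by positivity) (by positivity)]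
      apply ENNReal.ofReal_le_ofReal
      calc (θ*v₁+(1-θ)*v₂)^2 / logMean (θ*a₁+(1-θ)*a₂) (θ*b₁+(1-θ)*b₂)
          ≤ (θ*v₁+(1-θ)*v₂)^2 / (θ * logMean a₁ b₁ + (1-θ) * logMean a₂ b₂) := by
            gcongr
        _ ≤ _ := qol hp1 hp2 hθ0 hθ1
    · -- Λ₁ > 0, Λ₂ = 0
      by_cases hv2 : v₂ = 0
      · subst hv2
        have hc : θ * logMean a₁ b₁ ≤ logMean (θ*a₁+(1-θ)*a₂) (θ*b₁+(1-θ)*b₂) := by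
          nlinarith
        have hc' : 0 < logMean (θ*a₁+(1-θ)*a₂) (θ*b₁+(1-θ)*b₂) :=
          lt_of_lt_of_le (by positivity) hc
        rw [Ffn_of_pos hc', Ffn_of_pos hp1, Ffn_zero_v, ← ENNReal.ofReal_mul hθ0]
        simp only [mul_zero, add_zero]
        apply ENNReal.ofReal_le_ofReal
        have hpθ : 0 < θ * logMean a₁ b₁ := by positivity
        calc (θ*v₁)^2 / logMean (θ*a₁+(1-θ)*a₂) (θ*b₁+(1-θ)*b₂)
            ≤ (θ*v₁)^2 / (θ * logMean a₁ b₁) := by gcongr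
          _ = θ * (v₁^2 / logMean a₁ b₁) := by field_simp
      · rw [Ffn_top hp2 hv2, ENNReal.mul_top (by simp [ENNReal.ofReal_eq_zero]; linarith)]
        simp
    · -- Λ₁ = 0, Λ₂ > 0
      by_cases hv1 : v₁ = 0
      · subst hv1
        have hc : (1-θ) * logMean a₂ b₂ ≤ logMean (θ*a₁+(1-θ)*a₂) (θ*b₁+(1-θ)*b₂) := by
          nlinarith
        have hc' : 0 < logMean (θ*a₁+(1-θ)*a₂) (θ*b₁+(1-θ)*b₂) :=
          lt_of_lt_of_le (by positivity) hc
        rw [Ffn_of_pos hc', Ffn_of_pos hp2, Ffn_zero_v, ← ENNReal.ofReal_mul hθ1'.le]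
        simp only [mul_zero, zero_add]
        apply ENNReal.ofReal_le_ofReal
        have hpθ : 0 < (1-θ) * logMean a₂ b₂ := by positivity
        calc ((1-θ)*v₂)^2 / logMean (θ*a₁+(1-θ)*a₂) (θ*b₁+(1-θ)*b₂)
            ≤ ((1-θ)*v₂)^2 / ((1-θ) * logMean a₂ b₂) := by gcongr
          _ = (1-θ) * (v₂^2 / logMean a₂ b₂) := by field_simp
      · rw [Ffn_top hp1 hv1, ENNReal.mul_top (by simp [ENNReal.ofReal_eq_zero]; linarith)]
        simp
    · -- both zero
      by_cases hv1 : v₁ = 0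
      · by_cases hv2 : v₂ = 0
        · subst hv1; subst hv2
          rw [show θ * 0 + (1-θ) * 0 = (0:ℝ) from by ring, Ffn_zero_v]
          exact zero_le
        · rw [Ffn_top hp2 hv2, ENNReal.mul_top (by simp [ENNReal.ofReal_eq_zero]; linarith)]
          simp
      · rw [Ffn_top hp1 hv1, ENNReal.mul_top (by simp [ENNReal.ofReal_eq_zero]; linarith)]
        simp
  · intro c v a b hc ha hb
    rcases hc.eq_or_lt with hc' | hc'
    · rw [← hc']
      norm_num [Ffn_zero_v]
    · have hL := logMean_smul hc' ha hb
      by_cases h : 0 < logMean a b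
      · have h2 : 0 < logMean (c*a) (c*b) := by rw [hL]; positivity
        rw [Ffn_of_pos h2, Ffn_of_pos h, hL,
          show (c*v)^2 / (c * logMean a b) = c * (v^2 / logMean a b) from by
            field_simp, ENNReal.ofReal_mul hc]
      · have h2 : ¬ 0 < logMean (c*a) (c*b) := by
          rw [hL]; push_neg at h ⊢; nlinarith
        rcases eq_or_ne v 0 with hv | hv
        · subst hv
          rw [show c * 0 = (0:ℝ) from by ring, Ffn_zero_v, Ffn_zero_v, mul_zero]
        · rw [Ffn_top h2 (mul_ne_zero (ne_of_gt hc') hv), Ffn_top h hv,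
            ENNReal.mul_top (by simp [ENNReal.ofReal_eq_zero]; linarith)]
end

section
/- The function λ(a,b) = (a-b)(log a - log b) for a,b > 0 (extended by λ(a,a)=0 and λ(a,0)=λ(0,b)=+∞ for a,b>0, λ(0,0)=0) is jointly convex and 1-homogeneous on ℝ₊ × ℝ₊. -/
/-- The function `λ(a,b) = (a-b)(log a - log b)` for `a,b > 0`, `0` at `(0,0)` and `+∞`
when exactly one of `a, b` is zero. -/
noncomputable def lamFn (a b : ℝ) : ENNReal :=
  if 0 < a ∧ 0 < b then ENNReal.ofReal ((a - b) * (Real.log a - Real.log b))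
  else if a = 0 ∧ b = 0 then 0
  else ⊤

/-- Two-term log-sum inequality. -/
lemma logsum_aux {a b c d : ℝ} (ha : 0 < a) (hb : 0 < b) (hc : 0 < c) (hd : 0 < d) :
    (a + c) * Real.log ((a + c) / (b + d)) ≤ a * Real.log (a / b) + c * Real.log (c / d) := by
  have hbd : (0:ℝ) < b + d := by linarith
  have key := Real.convexOn_mul_log.2 (Set.mem_Ici.mpr (div_pos ha hb).le)
      (Set.mem_Ici.mpr (div_pos hc hd).le)
      (by positivity : (0:ℝ) ≤ b / (b + d)) (by positivity : (0:ℝ) ≤ d / (b + d))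
      (by field_simp)
  simp only [smul_eq_mul] at key
  have h1 : b / (b + d) * (a / b) + d / (b + d) * (c / d) = (a + c) / (b + d) := by
    field_simp
  rw [h1] at key
  have h2 : (b + d) * ((a + c) / (b + d) * Real.log ((a + c) / (b + d)))
      = (a + c) * Real.log ((a + c) / (b + d)) := by field_simp
  have h3 : (b + d) * (b / (b + d) * (a / b * Real.log (a / b)))
      = a * Real.log (a / b) := by field_simp
  have h4 : (b + d) * (d / (b + d) * (c / d * Real.log (c / d)))
      = c * Real.log (c / d) := by field_simp
  have := mul_le_mul_of_nonneg_left key hbd.le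
  rw [mul_add, h2, h3, h4] at this
  linarith

lemma lam_eq_aux {a b : ℝ} (ha : 0 < a) (hb : 0 < b) :
    (a - b) * (Real.log a - Real.log b) = a * Real.log (a / b) + b * Real.log (b / a) := by
  rw [Real.log_div ha.ne' hb.ne', Real.log_div hb.ne' ha.ne']; ring

lemma lam_nonneg_aux {a b : ℝ} (ha : 0 < a) (hb : 0 < b) :
    0 ≤ (a - b) * (Real.log a - Real.log b) := by
  rcases le_total a b with h | h
  · have := Real.log_le_log ha h; nlinarith
  · have := Real.log_le_log hb h; nlinarith

/-- Core real convexity inequality. -/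
lemma lam_core_aux {a b c d θ : ℝ} (ha : 0 < a) (hb : 0 < b) (hc : 0 < c) (hd : 0 < d)
    (hθ : 0 < θ) (hθ1 : θ < 1) :
    ((θ*a + (1-θ)*c) - (θ*b + (1-θ)*d)) *
      (Real.log (θ*a + (1-θ)*c) - Real.log (θ*b + (1-θ)*d))
      ≤ θ * ((a - b) * (Real.log a - Real.log b))
        + (1-θ) * ((c - d) * (Real.log c - Real.log d)) := by
  have hσ : (0:ℝ) < 1 - θ := by linarith
  have hA : 0 < θ*a + (1-θ)*c := by positivity
  have hB : 0 < θ*b + (1-θ)*d := by positivity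
  have h1 := logsum_aux (mul_pos hθ ha) (mul_pos hθ hb) (mul_pos hσ hc) (mul_pos hσ hd)
  have h2 := logsum_aux (mul_pos hθ hb) (mul_pos hθ ha) (mul_pos hσ hd) (mul_pos hσ hc)
  rw [mul_div_mul_left _ _ hθ.ne', mul_div_mul_left _ _ hσ.ne'] at h1 h2
  rw [lam_eq_aux ha hb, lam_eq_aux hc hd, lam_eq_aux hA hB]
  linarith

lemma lamFn_zero : lamFn 0 0 = 0 := by simp [lamFn]

lemma lamFn_pos {a b : ℝ} (ha : 0 < a) (hb : 0 < b) :
    lamFn a b = ENNReal.ofReal ((a - b) * (Real.log a - Real.log b)) := by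
  simp [lamFn, ha, hb]

lemma lamFn_ne_top {a b : ℝ} (h : lamFn a b ≠ ⊤) :
    (0 < a ∧ 0 < b) ∨ (a = 0 ∧ b = 0) := by
  unfold lamFn at h
  split_ifs at h with h1 h2
  · exact Or.inl h1
  · exact Or.inr h2
  · exact absurd rfl h

lemma lamFn_hom : ∀ c a b : ℝ, 0 ≤ c → 0 ≤ a → 0 ≤ b →
    lamFn (c * a) (c * b) = ENNReal.ofReal c * lamFn a b := by
  intro c a b hc ha hb
  rcases hc.eq_or_lt with rfl | hc
  · simp [lamFn_zero]
  rcases ha.eq_or_lt with rfl | ha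
  · rcases hb.eq_or_lt with rfl | hb
    · simp [lamFn_zero]
    · have h1 : lamFn 0 b = ⊤ := by simp [lamFn, hb.ne', hb]
      have h2 : lamFn (c * 0) (c * b) = ⊤ := by
        simp [lamFn, (mul_pos hc hb).ne', mul_pos hc hb]
      rw [h1, h2, ENNReal.mul_top (by simp [ENNReal.ofReal_pos.mpr hc |>.ne'])]
  rcases hb.eq_or_lt with rfl | hb
  · have h1 : lamFn a 0 = ⊤ := by simp [lamFn, ha.ne', ha]
    have h2 : lamFn (c * a) (c * 0) = ⊤ := by
      simp [lamFn, (mul_pos hc ha).ne', mul_pos hc ha]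
    rw [h1, h2, ENNReal.mul_top (by simp [ENNReal.ofReal_pos.mpr hc |>.ne'])]
  · rw [lamFn_pos ha hb, lamFn_pos (mul_pos hc ha) (mul_pos hc hb),
      ← ENNReal.ofReal_mul hc.le]
    congr 1
    rw [Real.log_mul hc.ne' ha.ne', Real.log_mul hc.ne' hb.ne']
    ring

theorem lamFn_convex_and_homogeneous :
    (∀ a₁ b₁ a₂ b₂ θ : ℝ, 0 ≤ a₁ → 0 ≤ b₁ → 0 ≤ a₂ → 0 ≤ b₂ → 0 ≤ θ → θ ≤ 1 →
      lamFn (θ * a₁ + (1 - θ) * a₂) (θ * b₁ + (1 - θ) * b₂)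
        ≤ ENNReal.ofReal θ * lamFn a₁ b₁ + ENNReal.ofReal (1 - θ) * lamFn a₂ b₂)
    ∧ (∀ c a b : ℝ, 0 ≤ c → 0 ≤ a → 0 ≤ b →
      lamFn (c * a) (c * b) = ENNReal.ofReal c * lamFn a b) := by
  refine ⟨?_, lamFn_hom⟩
  intro a₁ b₁ a₂ b₂ θ ha₁ hb₁ ha₂ hb₂ hθ0 hθ1
  rcases hθ0.eq_or_lt with rfl | hθ0'
  · simp
  rcases hθ1.eq_or_lt with rfl | hθ1'
  · simp
  have hσ : (0:ℝ) < 1 - θ := by linarith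
  by_cases hA : lamFn a₁ b₁ = ⊤
  · rw [hA, ENNReal.mul_top (by simp [ENNReal.ofReal_pos.mpr hθ0' |>.ne']), top_add]
    exact le_top
  by_cases hB : lamFn a₂ b₂ = ⊤
  · rw [hB, ENNReal.mul_top (by simp [ENNReal.ofReal_pos.mpr hσ |>.ne'])]
    simp
  rcases lamFn_ne_top hA with ⟨ha₁', hb₁'⟩ | ⟨rfl, rfl⟩
  · rcases lamFn_ne_top hB with ⟨ha₂', hb₂'⟩ | ⟨rfl, rfl⟩
    · -- all positive: core inequality
      have hApos : 0 < θ * a₁ + (1 - θ) * a₂ := by positivity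
      have hBpos : 0 < θ * b₁ + (1 - θ) * b₂ := by positivity
      rw [lamFn_pos ha₁' hb₁', lamFn_pos ha₂' hb₂', lamFn_pos hApos hBpos,
        ← ENNReal.ofReal_mul hθ0, ← ENNReal.ofReal_mul hσ.le,
        ← ENNReal.ofReal_add (mul_nonneg hθ0 (lam_nonneg_aux ha₁' hb₁'))
          (mul_nonneg hσ.le (lam_nonneg_aux ha₂' hb₂'))]
      exact ENNReal.ofReal_le_ofReal (lam_core_aux ha₁' hb₁' ha₂' hb₂' hθ0' hθ1')
    · -- second pair is (0,0)
      simp only [mul_zero, add_zero, lamFn_zero]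
      rw [lamFn_hom θ a₁ b₁ hθ0 ha₁ hb₁]
  · -- first pair is (0,0)
    simp only [mul_zero, zero_add, lamFn_zero]
    rw [lamFn_hom (1 - θ) a₂ b₂ hσ.le ha₂ hb₂]
end

section
/- Let X be a finite set and ν ∈ P_N(X), i.e., Nν(x) is a nonnegative integer for each x and ∑ₓ ν(x) = 1. Then -log(N+1)/N ≤ -(1/N)·log( N! / ∏ₓ (Nν(x))! ) - ∑ₓ ν(x) log ν(x) ≤ |X|·log(N)/N + 1/N (with the convention 0·log 0 = 0). -/
open Nat Finset

lemma log_add_one_sub_log_le (a : ℝ) (ha : 0 < a) : Real.log (a+1) - Real.log a ≤ 1/a := by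
  have h := Real.log_le_sub_one_of_pos (x := (a+1)/a) (by positivity)
  rw [Real.log_div (by positivity) (by positivity)] at h
  have h2 : (a+1)/a - 1 = 1/a := by field_simp; ring
  linarith [h2 ▸ h]

lemma le_log_add_one_sub_log (a : ℝ) (ha : 0 < a) : 1/(a+1) ≤ Real.log (a+1) - Real.log a := by
  have h := Real.log_le_sub_one_of_pos (x := a/(a+1)) (by positivity)
  rw [Real.log_div (by positivity) (by positivity)] at h
  have h2 : a/(a+1) - 1 = -(1/(a+1)) := by field_simp; ring
  linarith [h2 ▸ h]

lemma log_factorial_le (n : ℕ) :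
    Real.log (n !) ≤ ((n:ℝ) + 1) * Real.log ((n:ℝ)+1) - n := by
  induction n with
  | zero => simp
  | succ n ih =>
    have h1 : Real.log ((n+1)! : ℕ) = Real.log (n ! : ℕ) + Real.log ((n:ℝ)+1) := by
      rw [Nat.factorial_succ]
      push_cast
      rw [Real.log_mul (by positivity) (by positivity)]
      ring
    have key := le_log_add_one_sub_log ((n:ℝ)+1) (by positivity)
    have hm : ((n:ℝ)+1+1) * (1/((n:ℝ)+1+1)) = 1 := by field_simp
    have key2 : (1:ℝ) ≤ ((n:ℝ)+1+1) * (Real.log ((n:ℝ)+1+1) - Real.log ((n:ℝ)+1)) := by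
      have := mul_le_mul_of_nonneg_left key (by positivity : (0:ℝ) ≤ (n:ℝ)+1+1)
      calc (1:ℝ) = ((n:ℝ)+1+1) * (1/((n:ℝ)+1+1)) := hm.symm
        _ ≤ _ := this
    push_cast
    push_cast at ih h1
    nlinarith [key2]

lemma le_log_factorial (n : ℕ) (hn : 1 ≤ n) :
    (n:ℝ) * Real.log n - n + 1 ≤ Real.log (n !) := by
  induction n with
  | zero => omega
  | succ n ih =>
    rcases Nat.eq_zero_or_pos n with h0 | h0
    · subst h0; simp
    · have ih' := ih h0
      have h1 : Real.log ((n+1)! : ℕ) = Real.log (n ! : ℕ) + Real.log ((n:ℝ)+1) := by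
        rw [Nat.factorial_succ]
        push_cast
        rw [Real.log_mul (by positivity) (by positivity)]
        ring
      have hn0 : (0:ℝ) < n := by exact_mod_cast h0
      have key := log_add_one_sub_log_le (n:ℝ) hn0
      have key2 : (n:ℝ) * (Real.log ((n:ℝ)+1) - Real.log n) ≤ 1 := by
        have := mul_le_mul_of_nonneg_left key (le_of_lt hn0)
        have hm : (n:ℝ) * (1/(n:ℝ)) = 1 := by field_simp
        linarith [hm ▸ this]
      push_cast
      push_cast at ih' h1
      nlinarith [key2]

lemma log_factorial_le' (n : ℕ) (hn : 1 ≤ n) :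
    Real.log (n !) ≤ (n:ℝ) * Real.log n - n + 1 + Real.log n := by
  obtain ⟨m, rfl⟩ : ∃ m, n = m + 1 := ⟨n - 1, by omega⟩
  have h1 : Real.log ((m+1)! : ℕ) = Real.log (m ! : ℕ) + Real.log ((m:ℝ)+1) := by
    rw [Nat.factorial_succ]
    push_cast
    rw [Real.log_mul (by positivity) (by positivity)]
    ring
  have := log_factorial_le m
  push_cast
  push_cast at h1 this
  linarith

set_option maxHeartbeats 1000000 in
theorem stirling_multinomial_estimate (X : Type) [Fintype X]
    (hX : 2 ≤ Fintype.card X) (N : ℕ) (hN : 1 ≤ N)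
    (k : X → ℕ) (hk : ∑ x, k x = N) :
    -(Real.log (N + 1)) / N
      ≤ -(1 / N) * Real.log ((N ! : ℝ) / ∏ x, ((k x)! : ℝ))
          - ∑ x, ((k x : ℝ) / N) * Real.log ((k x : ℝ) / N)
    ∧ -(1 / N) * Real.log ((N ! : ℝ) / ∏ x, ((k x)! : ℝ))
          - ∑ x, ((k x : ℝ) / N) * Real.log ((k x : ℝ) / N)
      ≤ (Fintype.card X : ℝ) * Real.log N / N + 1 / N := by
  classical
  have hN0 : (0:ℝ) < N := by exact_mod_cast hN
  set S : Finset X := Finset.univ.filter (fun x => k x ≠ 0) with hSdef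
  have hmemS : ∀ x ∈ S, 1 ≤ k x := by
    intro x hx
    simp only [hSdef, Finset.mem_filter] at hx
    omega
  have hkSnat : ∑ x ∈ S, k x = N := by
    rw [← hk]
    exact Finset.sum_subset (Finset.subset_univ S)
      (fun x _ hx => by simpa [hSdef] using hx)
  have hkS : ∑ x ∈ S, (k x : ℝ) = (N:ℝ) := by exact_mod_cast congrArg (Nat.cast : ℕ → ℝ) hkSnat
  have hScard1 : 1 ≤ S.card := by
    rcases Finset.eq_empty_or_nonempty S with h | h
    · rw [h] at hkSnat; simp at hkSnat; omega
    · exact Finset.card_pos.mpr h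
  have hScardN : S.card ≤ N := by
    calc S.card = ∑ _x ∈ S, 1 := by simp
    _ ≤ ∑ x ∈ S, k x := Finset.sum_le_sum hmemS
    _ = N := hkSnat
  have hScardX : S.card ≤ Fintype.card X := by
    simpa using Finset.card_le_univ S
  set s : ℝ := (S.card : ℝ) with hsdef
  have hs1 : (1:ℝ) ≤ s := by rw [hsdef]; exact_mod_cast hScard1
  have hs0 : (0:ℝ) < s := by linarith
  have hsN : s ≤ (N:ℝ) := by rw [hsdef]; exact_mod_cast hScardN
  have hsX : s ≤ (Fintype.card X : ℝ) := by rw [hsdef]; exact_mod_cast hScardX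
  set L : ℝ := Real.log (N !) with hLdef
  set F : ℝ := ∑ x ∈ S, Real.log ((k x)! : ℕ) with hFdef
  set T : ℝ := ∑ x ∈ S, (k x : ℝ) * Real.log (k x) with hTdef
  set G : ℝ := ∑ x ∈ S, Real.log (k x) with hGdef
  -- log of the quotient
  have hprodne : (∏ x, ((k x)! : ℝ)) ≠ 0 := by positivity
  have hlogdiv : Real.log ((N ! : ℝ) / ∏ x, ((k x)! : ℝ)) = L - F := by
    rw [Real.log_div (by positivity) hprodne, Real.log_prod (fun x _ => by positivity)]
    congr 1
    rw [hFdef]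
    refine (Finset.sum_subset (Finset.subset_univ S) (fun x _ hx => ?_)).symm
    have : k x = 0 := by simpa [hSdef] using hx
    simp [this]
  -- entropy sum
  have hsum : ∑ x, ((k x : ℝ) / N) * Real.log ((k x : ℝ) / N) = T / N - Real.log N := by
    have hrestrict : ∑ x, ((k x : ℝ) / N) * Real.log ((k x : ℝ) / N)
        = ∑ x ∈ S, ((k x : ℝ) / N) * Real.log ((k x : ℝ) / N) := by
      refine (Finset.sum_subset (Finset.subset_univ S) (fun x _ hx => ?_)).symm
      have : k x = 0 := by simpa [hSdef] using hx
      simp [this]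
    rw [hrestrict]
    have hterm : ∀ x ∈ S, ((k x : ℝ) / N) * Real.log ((k x : ℝ) / N)
        = ((k x : ℝ) * Real.log (k x)) / N - ((k x : ℝ) / N) * Real.log N := by
      intro x hx
      have hkx : (0:ℝ) < (k x : ℝ) := by exact_mod_cast hmemS x hx
      rw [Real.log_div (ne_of_gt hkx) (ne_of_gt hN0)]
      ring
    rw [Finset.sum_congr rfl hterm, Finset.sum_sub_distrib, ← Finset.sum_div, ← hTdef]
    congr 1
    rw [← Finset.sum_mul, ← Finset.sum_div, hkS, div_self (ne_of_gt hN0), one_mul]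
  -- factorial sum bounds
  have hF_low : T - N + s ≤ F := by
    have h : ∑ x ∈ S, ((k x : ℝ) * Real.log (k x) - (k x : ℝ) + 1) ≤ F :=
      Finset.sum_le_sum (fun x hx => le_log_factorial (k x) (hmemS x hx))
    calc T - N + s = ∑ x ∈ S, ((k x : ℝ) * Real.log (k x) - (k x : ℝ) + 1) := by
          rw [Finset.sum_add_distrib, Finset.sum_sub_distrib, ← hTdef, hkS]
          simp [hsdef]
      _ ≤ F := h
  have hF_up : F ≤ T - N + s + G := by
    have h : F ≤ ∑ x ∈ S, ((k x : ℝ) * Real.log (k x) - (k x : ℝ) + 1 + Real.log (k x)) :=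
      Finset.sum_le_sum (fun x hx => log_factorial_le' (k x) (hmemS x hx))
    calc F ≤ _ := h
      _ = T - N + s + G := by
          rw [Finset.sum_add_distrib, Finset.sum_add_distrib, Finset.sum_sub_distrib,
            ← hTdef, ← hGdef, hkS]
          simp [hsdef]
  -- bound on G via tangent line trick
  have hG : G ≤ s * Real.log N - s * Real.log s := by
    have hterm : ∀ x ∈ S, Real.log (k x) ≤ (k x : ℝ) * (s / N) - 1 + (Real.log N - Real.log s) := by
      intro x hx
      have hkx : (0:ℝ) < (k x : ℝ) := by exact_mod_cast hmemS x hx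
      have h := Real.log_le_sub_one_of_pos (x := (k x : ℝ) * s / N) (by positivity)
      rw [Real.log_div (by positivity) (ne_of_gt hN0),
        Real.log_mul (ne_of_gt hkx) (ne_of_gt hs0)] at h
      have : (k x : ℝ) * s / N = (k x : ℝ) * (s / N) := by ring
      linarith [this ▸ h]
    calc G ≤ ∑ x ∈ S, ((k x : ℝ) * (s / N) - 1 + (Real.log N - Real.log s)) :=
        Finset.sum_le_sum hterm
      _ = s * Real.log N - s * Real.log s := by
          rw [Finset.sum_add_distrib, Finset.sum_sub_distrib, ← Finset.sum_mul, hkS]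
          simp [hsdef]
          field_simp
          ring
  -- Stirling bounds on L
  have hL_up : L ≤ ((N:ℝ) + 1) * Real.log ((N:ℝ) + 1) - N := log_factorial_le N
  have hL_low : (N:ℝ) * Real.log N - N + 1 ≤ L := le_log_factorial N hN
  -- the key rearranged expression
  have hE : -(1 / (N:ℝ)) * Real.log ((N ! : ℝ) / ∏ x, ((k x)! : ℝ))
      - ∑ x, ((k x : ℝ) / N) * Real.log ((k x : ℝ) / N)
      = (F - L - T + N * Real.log N) / N := by
    rw [hlogdiv, hsum]
    field_simp
    ring
  have hmul : (N:ℝ) * Real.log ((N:ℝ)+1) - (N:ℝ) * Real.log N ≤ 1 := by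
    have h := log_add_one_sub_log_le (N:ℝ) hN0
    have := mul_le_mul_of_nonneg_left h (le_of_lt hN0)
    have hm : (N:ℝ) * (1/(N:ℝ)) = 1 := by field_simp
    nlinarith
  have hlogN : (0:ℝ) ≤ Real.log N := Real.log_nonneg (by exact_mod_cast hN)
  constructor
  · rw [hE, div_le_div_iff_of_pos_right hN0]
    have hexp : ((N:ℝ)+1) * Real.log ((N:ℝ)+1)
        = (N:ℝ) * Real.log ((N:ℝ)+1) + Real.log ((N:ℝ)+1) := by ring
    linarith
  · rw [hE]
    have hrhs : (Fintype.card X : ℝ) * Real.log N / N + 1 / N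
        = ((Fintype.card X : ℝ) * Real.log N + 1) / N := by ring
    rw [hrhs, div_le_div_iff_of_pos_right hN0]
    have hslogN : s * Real.log N ≤ (Fintype.card X : ℝ) * Real.log N :=
      mul_le_mul_of_nonneg_right hsX hlogN
    have hslogs : s - s * Real.log s ≤ 2 := by
      rcases le_or_gt S.card 2 with h | h
      · have hs2 : s ≤ 2 := by rw [hsdef]; exact_mod_cast h
        have hlogs : 0 ≤ Real.log s := Real.log_nonneg hs1
        nlinarith
      · have h3s : (3:ℝ) ≤ s := by rw [hsdef]; exact_mod_cast h
        have h3 : (1:ℝ) ≤ Real.log s := by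
          rw [Real.le_log_iff_exp_le hs0]
          calc Real.exp 1 ≤ 2.7182818286 := Real.exp_one_lt_d9.le
            _ ≤ s := by linarith
        nlinarith
    linarith
end
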